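/- arXiv:2604.05176 — 2 statements merged into one kernel-verified Lean document; each statement's English description precedes it below -/
import Mathlib

section
/- Let ε ∈ (0,1) and N ≥ exp(exp(1.842/ε)). Then the number of positive integers n ≤ N with τ(n) ≥ (log N)^{log(2)(1−ε)} is at least N·(1 − 85.165/(ε²·log log N)). -/
open scoped Classical
open Finset

lemma hr_factorization_prod {N n : ℕ} (hn : n ∈ Finset.Icc 1 N) :
    ∏ p ∈ (N + 1).primesBelow, p ^ n.factorization p = n := by
  rw [Finset.mem_Icc] at hn
  have hn0 : n ≠ 0 := by omega
  have hsub : n.primeFactors ⊆ (N + 1).primesBelow := by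
    intro p hp
    have hpn := Nat.le_of_dvd (by omega) (Nat.dvd_of_mem_primeFactors hp)
    exact Nat.mem_primesBelow.mpr ⟨by omega, Nat.prime_of_mem_primeFactors hp⟩
  rw [← Finset.prod_subset hsub (fun p _ hp => by
    rw [Nat.factorization_eq_zero_of_not_dvd ?_, pow_zero]
    intro hdvd
    by_cases hp' : p.Prime
    · exact hp (Nat.mem_primeFactors.mpr ⟨hp', hdvd, hn0⟩)
    · exact hp (absurd (Nat.mem_primesBelow.mp ‹p ∈ (N+1).primesBelow›).2 hp'))]
  conv_rhs => rw [← Nat.factorization_prod_pow_eq_self hn0]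
  rfl

lemma hr_harmonic_le_prod (N : ℕ) :
    ∑ n ∈ Finset.Icc 1 N, (n : ℝ)⁻¹ ≤
      ∏ p ∈ (N + 1).primesBelow, (1 - (p : ℝ)⁻¹)⁻¹ := by
  set P := (N + 1).primesBelow with hP
  have hprime : ∀ p ∈ P, p.Prime := fun p hp => (Nat.mem_primesBelow.mp hp).2
  -- step 1: geometric sums
  have step1 : ∏ p ∈ P, ∑ i ∈ Finset.range (N + 1), ((p : ℝ)⁻¹) ^ i ≤
      ∏ p ∈ P, (1 - (p : ℝ)⁻¹)⁻¹ := by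
    refine Finset.prod_le_prod (fun p hp => ?_) (fun p hp => ?_)
    · refine Finset.sum_nonneg fun i _ => by positivity
    · have h2 : (2 : ℝ) ≤ p := by exact_mod_cast (hprime p hp).two_le
      have hlt : (p : ℝ)⁻¹ < 1 := by
        rw [inv_lt_one_iff₀]; right; linarith
      have hne : (p : ℝ)⁻¹ ≠ 1 := ne_of_lt hlt
      have h1r : (0:ℝ) < 1 - (p:ℝ)⁻¹ := by linarith
      have hpow : (0:ℝ) ≤ ((p:ℝ)⁻¹) ^ (N+1) := by positivity
      have hgm := geom_sum_mul ((p:ℝ)⁻¹) (N+1)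
      have hic := inv_mul_cancel₀ (ne_of_gt h1r)
      nlinarith [hgm, hic, hpow, h1r]
  refine le_trans ?_ step1
  -- step 2: expand product of sums
  rw [Finset.prod_sum]
  -- step 3: injection
  set F : (Π a ∈ P, ℕ) → ℝ := fun g => ∏ x ∈ P.attach, ((x.1 : ℝ)⁻¹) ^ (g x.1 x.2) with hF
  set G : ℕ → (Π a ∈ P, ℕ) := fun n => fun p _ => n.factorization p with hG
  have hval : ∀ n ∈ Finset.Icc 1 N, F (G n) = (n : ℝ)⁻¹ := by
    intro n hn
    have : F (G n) = ∏ p ∈ P, ((p : ℝ)⁻¹) ^ (n.factorization p) := by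
      rw [hF]; exact Finset.prod_attach P fun p => ((p : ℝ)⁻¹) ^ (n.factorization p)
    rw [this]
    have : ∏ p ∈ P, ((p : ℝ)⁻¹) ^ (n.factorization p)
        = (∏ p ∈ P, ((p : ℝ)) ^ (n.factorization p))⁻¹ := by
      rw [← Finset.prod_inv_distrib]
      exact Finset.prod_congr rfl fun p _ => (inv_pow _ _)
    rw [this]
    congr 1
    exact_mod_cast congrArg (fun k : ℕ => (k:ℝ)) (hr_factorization_prod hn)
  have hinj : ∀ n ∈ Finset.Icc 1 N, ∀ m ∈ Finset.Icc 1 N, G n = G m → n = m := by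
    intro n hn m hm h
    rw [Finset.mem_Icc] at hn hm
    refine Nat.factorization_inj (by simp; omega) (by simp; omega) ?_
    ext p
    by_cases hp : p ∈ P
    · exact congrFun (congrFun h p) hp
    · by_cases hp' : p.Prime
      · have hgt : N < p := by
          by_contra hle
          exact hp (Nat.mem_primesBelow.mpr ⟨by omega, hp'⟩)
        rw [Nat.factorization_eq_zero_of_not_dvd, Nat.factorization_eq_zero_of_not_dvd]
        · intro hd; exact absurd (Nat.le_of_dvd (by omega) hd) (by omega)
        · intro hd; exact absurd (Nat.le_of_dvd (by omega) hd) (by omega)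
      · rw [Nat.factorization_eq_zero_of_not_prime _ hp',
            Nat.factorization_eq_zero_of_not_prime _ hp']
  have himg : (Finset.Icc 1 N).image G ⊆ P.pi fun _ => Finset.range (N + 1) := by
    intro g hg
    rw [Finset.mem_image] at hg
    obtain ⟨n, hn, rfl⟩ := hg
    rw [Finset.mem_Icc] at hn
    refine Finset.mem_pi.mpr fun p hp => ?_
    rw [Finset.mem_range]
    calc n.factorization p < n := Nat.factorization_lt p (by omega)
      _ < N + 1 := by omega
  calc ∑ n ∈ Finset.Icc 1 N, (n : ℝ)⁻¹
      = ∑ n ∈ Finset.Icc 1 N, F (G n) := Finset.sum_congr rfl fun n hn => (hval n hn).symm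
    _ = ∑ g ∈ (Finset.Icc 1 N).image G, F g := (Finset.sum_image hinj).symm
    _ ≤ ∑ g ∈ P.pi fun _ => Finset.range (N + 1), F g := by
        refine Finset.sum_le_sum_of_subset_of_nonneg himg fun g _ _ => ?_
        exact Finset.prod_nonneg fun x _ => by positivity
    _ = _ := rfl

lemma hr_omega_eq {N n : ℕ} (hn : n ∈ Finset.Icc 1 N) :
    (n.primeFactors.card : ℝ) = ∑ p ∈ (N + 1).primesBelow, if p ∣ n then (1:ℝ) else 0 := by
  rw [Finset.mem_Icc] at hn
  rw [Finset.sum_boole]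
  congr 2
  ext p
  simp only [Nat.mem_primeFactors, Finset.mem_filter, Nat.mem_primesBelow]
  constructor
  · rintro ⟨hp, hd, h0⟩
    exact ⟨⟨Nat.lt_succ_of_le (le_trans (Nat.le_of_dvd (by omega) hd) hn.2), hp⟩, hd⟩
  · rintro ⟨⟨_, hp⟩, hd⟩
    exact ⟨hp, hd, by omega⟩

lemma hr_count_dvd (N p : ℕ) :
    ((Finset.Icc 1 N).filter (fun n => p ∣ n)).card = N / p := by
  rw [show Finset.Icc 1 N = Finset.Ioc 0 N from rfl]
  exact Nat.Ioc_filter_dvd_card_eq_div N p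

lemma hr_div_lower {N p : ℕ} (hp : 0 < p) : (N : ℝ) * (p:ℝ)⁻¹ - 1 ≤ ((N / p : ℕ) : ℝ) := by
  have h1 : (N:ℝ) = p * ↑(N/p) + ↑(N % p) := by exact_mod_cast (Nat.div_add_mod N p).symm
  have h2 : ((N % p : ℕ):ℝ) < p := by exact_mod_cast Nat.mod_lt N hp
  have hppos : (0:ℝ) < p := by exact_mod_cast hp
  have hip : (p:ℝ)⁻¹ * p = 1 := inv_mul_cancel₀ (ne_of_gt hppos)
  have hipos : (0:ℝ) < (p:ℝ)⁻¹ := inv_pos.mpr hppos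
  nlinarith [h1, h2, hip, hipos]

lemma hr_first_moment (N : ℕ) :
    (N : ℝ) * (∑ p ∈ (N + 1).primesBelow, (p:ℝ)⁻¹) - ((N + 1).primesBelow.card : ℝ)
      ≤ ∑ n ∈ Finset.Icc 1 N, (n.primeFactors.card : ℝ) := by
  have h1 : ∑ n ∈ Finset.Icc 1 N, (n.primeFactors.card : ℝ)
      = ∑ p ∈ (N + 1).primesBelow, ((N / p : ℕ) : ℝ) := by
    rw [Finset.sum_congr rfl (fun n hn => hr_omega_eq hn), Finset.sum_comm]
    refine Finset.sum_congr rfl fun p hp => ?_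
    rw [Finset.sum_boole, hr_count_dvd]
  rw [h1]
  calc (N : ℝ) * (∑ p ∈ (N + 1).primesBelow, (p:ℝ)⁻¹) - ((N + 1).primesBelow.card : ℝ)
      = ∑ p ∈ (N + 1).primesBelow, ((N:ℝ) * (p:ℝ)⁻¹ - 1) := by
        rw [Finset.sum_sub_distrib, ← Finset.mul_sum, Finset.sum_const, nsmul_eq_mul, mul_one]
    _ ≤ _ := Finset.sum_le_sum fun p hp =>
        hr_div_lower (by have := (Nat.mem_primesBelow.mp hp).2.two_le; omega)

lemma hr_second_moment (N : ℕ) :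
    ∑ n ∈ Finset.Icc 1 N, (n.primeFactors.card : ℝ)^2
      ≤ (N : ℝ) * (∑ p ∈ (N + 1).primesBelow, (p:ℝ)⁻¹)
        + (N : ℝ) * (∑ p ∈ (N + 1).primesBelow, (p:ℝ)⁻¹)^2 := by
  set P := (N + 1).primesBelow with hP
  have h1 : ∑ n ∈ Finset.Icc 1 N, (n.primeFactors.card : ℝ)^2
      = ∑ p ∈ P, ∑ q ∈ P, (((Finset.Icc 1 N).filter (fun n => p ∣ n ∧ q ∣ n)).card : ℝ) := by
    have key : ∀ n ∈ Finset.Icc 1 N, (n.primeFactors.card : ℝ)^2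
        = ∑ p ∈ P, ∑ q ∈ P, (if p ∣ n ∧ q ∣ n then (1:ℝ) else 0) := by
      intro n hn
      rw [sq, hr_omega_eq hn, Finset.sum_mul_sum]
      refine Finset.sum_congr rfl fun p _ => Finset.sum_congr rfl fun q _ => ?_
      by_cases h1 : p ∣ n <;> by_cases h2 : q ∣ n <;> simp [h1, h2]
    rw [Finset.sum_congr rfl key, Finset.sum_comm]
    refine Finset.sum_congr rfl fun p _ => ?_
    rw [Finset.sum_comm]
    exact Finset.sum_congr rfl fun q _ => by rw [Finset.sum_boole]
  rw [h1]
  have key : ∀ p ∈ P, ∀ q ∈ P, (((Finset.Icc 1 N).filter (fun n => p ∣ n ∧ q ∣ n)).card : ℝ)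
      ≤ (if p = q then (N:ℝ) * (p:ℝ)⁻¹ else 0) + (N:ℝ) * (p:ℝ)⁻¹ * (q:ℝ)⁻¹ := by
    intro p hp q hq
    have hpp := (Nat.mem_primesBelow.mp hp).2
    have hqp := (Nat.mem_primesBelow.mp hq).2
    by_cases hpq : p = q
    · subst hpq
      rw [if_pos rfl]
      have heq : (Finset.Icc 1 N).filter (fun n => p ∣ n ∧ p ∣ n)
          = (Finset.Icc 1 N).filter (fun n => p ∣ n) := Finset.filter_congr fun n _ => by tauto
      rw [heq, hr_count_dvd]
      have h2 : (((N / p : ℕ)) : ℝ) ≤ (N : ℝ) / p := Nat.cast_div_le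
      have h3 : (0:ℝ) ≤ (N:ℝ) * (p:ℝ)⁻¹ * (p:ℝ)⁻¹ := by positivity
      have h4 : (N : ℝ) / p = (N:ℝ) * (p:ℝ)⁻¹ := div_eq_mul_inv _ _
      linarith
    · rw [if_neg hpq, zero_add]
      have hcop : Nat.Coprime p q := (Nat.coprime_primes hpp hqp).mpr hpq
      have heq : (Finset.Icc 1 N).filter (fun n => p ∣ n ∧ q ∣ n)
          = (Finset.Icc 1 N).filter (fun n => p * q ∣ n) := by
        refine Finset.filter_congr fun n _ => ?_
        constructor
        · rintro ⟨h1, h2⟩; exact hcop.mul_dvd_of_dvd_of_dvd h1 h2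
        · intro h; exact ⟨dvd_trans (dvd_mul_right p q) h, dvd_trans (dvd_mul_left q p) h⟩
      rw [heq, hr_count_dvd]
      calc (((N / (p * q) : ℕ)) : ℝ) ≤ (N : ℝ) / (↑(p * q)) := Nat.cast_div_le
        _ = (N:ℝ) * (p:ℝ)⁻¹ * (q:ℝ)⁻¹ := by push_cast; ring
  calc ∑ p ∈ P, ∑ q ∈ P, (((Finset.Icc 1 N).filter (fun n => p ∣ n ∧ q ∣ n)).card : ℝ)
      ≤ ∑ p ∈ P, ∑ q ∈ P, ((if p = q then (N:ℝ) * (p:ℝ)⁻¹ else 0) + (N:ℝ) * (p:ℝ)⁻¹ * (q:ℝ)⁻¹) :=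
        Finset.sum_le_sum fun p hp => Finset.sum_le_sum fun q hq => key p hp q hq
    _ = ∑ p ∈ P, ((N:ℝ) * (p:ℝ)⁻¹ + ∑ q ∈ P, (N:ℝ) * (p:ℝ)⁻¹ * (q:ℝ)⁻¹) := by
        refine Finset.sum_congr rfl fun p hp => ?_
        rw [Finset.sum_add_distrib, Finset.sum_ite_eq, if_pos hp]
    _ = (N : ℝ) * (∑ p ∈ P, (p:ℝ)⁻¹) + (N : ℝ) * (∑ p ∈ P, (p:ℝ)⁻¹)^2 := by
        rw [Finset.sum_add_distrib, ← Finset.mul_sum]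
        congr 1
        rw [sq, Finset.sum_mul_sum, Finset.mul_sum]
        refine Finset.sum_congr rfl fun p _ => ?_
        rw [Finset.mul_sum]
        exact Finset.sum_congr rfl fun q _ => by ring


-- prime counting bound: π(N) ≤ N/2 + 3/2

lemma hr_pi_bound (N : ℕ) : ((N + 1).primesBelow.card : ℝ) ≤ (N:ℝ)/2 + 3/2 := by
  have hsub : (N + 1).primesBelow ⊆ insert 2 ((Finset.Icc 1 N).filter (fun n => ¬ 2 ∣ n)) := by
    intro p hp
    obtain ⟨hlt, hpp⟩ := Nat.mem_primesBelow.mp hp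
    rcases eq_or_ne p 2 with rfl | hne
    · exact Finset.mem_insert_self _ _
    · refine Finset.mem_insert_of_mem (Finset.mem_filter.mpr ⟨Finset.mem_Icc.mpr
        ⟨hpp.one_lt.le, by omega⟩, ?_⟩)
      intro h2
      exact hne ((Nat.prime_dvd_prime_iff_eq Nat.prime_two hpp).mp h2).symm
  have h1 : (N + 1).primesBelow.card ≤ 1 + ((Finset.Icc 1 N).filter (fun n => ¬ 2 ∣ n)).card :=
    le_trans (Finset.card_le_card hsub) (by have := Finset.card_insert_le 2 ((Finset.Icc 1 N).filter (fun n => ¬ 2 ∣ n)); omega)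
  have h2 : ((Finset.Icc 1 N).filter (fun n => 2 ∣ n)).card
      + ((Finset.Icc 1 N).filter (fun n => ¬ 2 ∣ n)).card = N := by
    rw [Finset.card_filter_add_card_filter_not, Nat.card_Icc]; omega
  have h3 : ((Finset.Icc 1 N).filter (fun n => 2 ∣ n)).card = N / 2 := by
    rw [show Finset.Icc 1 N = Finset.Ioc 0 N from rfl]
    exact Nat.Ioc_filter_dvd_card_eq_div N 2
  have h4 : N / 2 ≥ (N - 1) / 2 := Nat.div_le_div_right (by omega)
  have h5 : ((Finset.Icc 1 N).filter (fun n => ¬ 2 ∣ n)).card = N - N / 2 := by omega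
  have h6 : 2 * (N / 2) + 1 ≥ N := by omega
  have : ((N + 1).primesBelow.card : ℝ) ≤ 1 + ((N:ℝ) - (N/2 : ℕ)) := by
    rw [h5] at h1
    have : ((N - N/2 : ℕ) : ℝ) = (N:ℝ) - ((N/2 : ℕ) : ℝ) := by
      have : N / 2 ≤ N := Nat.div_le_self N 2
      push_cast [this]; ring
    calc ((N + 1).primesBelow.card : ℝ) ≤ (1 : ℝ) + ((N - N/2 : ℕ) : ℝ) := by exact_mod_cast h1
      _ = 1 + ((N:ℝ) - (N/2 : ℕ)) := by rw [this]
  have h7 : ((N/2 : ℕ) : ℝ) ≥ (N:ℝ)/2 - 1/2 := by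
    have h8 : ((2 * (N / 2) + 1 : ℕ) : ℝ) ≥ ((N:ℕ):ℝ) := by exact_mod_cast h6
    push_cast at h8
    linarith
  linarith

-- telescoping: ∑_{p ∈ P} 1/(p(p-1)) ≤ 1

lemma hr_telescope (N : ℕ) :
    ∑ p ∈ (N + 1).primesBelow, ((p:ℝ) * ((p:ℝ) - 1))⁻¹ ≤ 1 := by
  have hsub : (N + 1).primesBelow ⊆ Finset.Icc 2 (N + 1) := by
    intro p hp
    obtain ⟨hlt, hpp⟩ := Nat.mem_primesBelow.mp hp
    exact Finset.mem_Icc.mpr ⟨hpp.two_le, by omega⟩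
  have h1 : ∑ p ∈ (N + 1).primesBelow, ((p:ℝ) * ((p:ℝ) - 1))⁻¹
      ≤ ∑ p ∈ Finset.Icc 2 (N + 1), ((p:ℝ) * ((p:ℝ) - 1))⁻¹ := by
    refine Finset.sum_le_sum_of_subset_of_nonneg hsub fun p hp _ => ?_
    have h2p : (2:ℝ) ≤ p := by exact_mod_cast (Finset.mem_Icc.mp hp).1
    have : (0:ℝ) < (p:ℝ) * ((p:ℝ) - 1) := by nlinarith
    positivity
  refine le_trans h1 ?_
  have key : ∀ M : ℕ, ∑ p ∈ Finset.Icc 2 (M + 1), ((p:ℝ) * ((p:ℝ) - 1))⁻¹ ≤ 1 - ((M:ℝ)+1)⁻¹ := by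
    intro M
    induction M with
    | zero => simp
    | succ m ih =>
      rw [show m + 1 + 1 = (m + 1) + 1 from rfl, Finset.sum_Icc_succ_top (by omega)]
      have hm : (0:ℝ) < (m:ℝ) + 1 := by positivity
      have hm2 : (0:ℝ) < (m:ℝ) + 2 := by positivity
      set x : ℝ := (m:ℝ) + 1 with hx
      have hxpos : (0:ℝ) < x := by positivity
      have heq : ((x + 1) * (x + 1 - 1))⁻¹ = x⁻¹ - (x+1)⁻¹ := by
        rw [inv_sub_inv (ne_of_gt hxpos) (by positivity : (0:ℝ) < x+1).ne',
          show x+1-1 = x from by ring, show x+1-x = 1 from by ring, one_div, mul_comm]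
      push_cast at ih ⊢
      rw [heq]
      linarith
  refine le_trans (key N) ?_
  have : (0:ℝ) < (N:ℝ) + 1 := by positivity
  have := inv_pos.mpr this
  linarith

-- 2^ω(n) ≤ τ(n)

lemma hr_tau_lower {n : ℕ} (hn : n ≠ 0) : 2 ^ n.primeFactors.card ≤ n.divisors.card := by
  rw [Nat.card_divisors hn]
  calc 2 ^ n.primeFactors.card = ∏ _p ∈ n.primeFactors, 2 := by rw [Finset.prod_const]
    _ ≤ _ := Finset.prod_le_prod' fun p hp => by
        have := Nat.Prime.factorization_pos_of_dvd (Nat.prime_of_mem_primeFactors hp) hn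
          (Nat.dvd_of_mem_primeFactors hp)
        omega

lemma hr_mertens (N : ℕ) (hN : 3 ≤ N) :
    Real.log (Real.log N) ≤ (∑ p ∈ (N+1).primesBelow, (p:ℝ)⁻¹) + 1 := by
  have hN1 : (1:ℝ) < N := by exact_mod_cast (by omega : 1 < N)
  have hlogpos : 0 < Real.log N := Real.log_pos hN1
  have hH : Real.log N ≤ ∑ n ∈ Finset.Icc 1 N, (n:ℝ)⁻¹ := by
    have h := log_le_harmonic_floor (N:ℝ) (by positivity)
    rw [Nat.floor_natCast] at h
    refine le_trans h ?_
    rw [harmonic_eq_sum_Icc]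
    push_cast
    exact le_refl _
  have hfacpos : ∀ p ∈ (N+1).primesBelow, (0:ℝ) < (1 - (p : ℝ)⁻¹)⁻¹ := by
    intro p hp
    have h2 : (2:ℝ) ≤ p := by exact_mod_cast (Nat.mem_primesBelow.mp hp).2.two_le
    have h1 : (p:ℝ)⁻¹ < 1 := by rw [inv_lt_one_iff₀]; right; linarith
    have : (0:ℝ) < 1 - (p:ℝ)⁻¹ := by linarith
    exact inv_pos.mpr this
  calc Real.log (Real.log N)
      ≤ Real.log (∑ n ∈ Finset.Icc 1 N, (n:ℝ)⁻¹) := Real.log_le_log hlogpos hH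
    _ ≤ Real.log (∏ p ∈ (N+1).primesBelow, (1 - (p : ℝ)⁻¹)⁻¹) :=
        Real.log_le_log (lt_of_lt_of_le hlogpos hH) (hr_harmonic_le_prod N)
    _ = ∑ p ∈ (N+1).primesBelow, Real.log ((1 - (p : ℝ)⁻¹)⁻¹) :=
        Real.log_prod (fun p hp => ne_of_gt (hfacpos p hp))
    _ ≤ ∑ p ∈ (N+1).primesBelow, ((p:ℝ)⁻¹ + ((p:ℝ) * ((p:ℝ) - 1))⁻¹) := by
        refine Finset.sum_le_sum fun p hp => ?_
        have h2 : (2:ℝ) ≤ p := by exact_mod_cast (Nat.mem_primesBelow.mp hp).2.two_le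
        have hinv : (p:ℝ)⁻¹ < 1 := by rw [inv_lt_one_iff₀]; right; linarith
        have h01 : (0:ℝ) < 1 - (p:ℝ)⁻¹ := by linarith
        have hle := Real.log_le_sub_one_of_pos (hfacpos p hp)
        have heq : (1 - (p:ℝ)⁻¹)⁻¹ - 1 = (p:ℝ)⁻¹ + ((p:ℝ) * ((p:ℝ) - 1))⁻¹ := by
          have hp0 : (p:ℝ) ≠ 0 := by linarith
          have hp1 : (p:ℝ) - 1 ≠ 0 := by intro h; rw [sub_eq_zero] at h; linarith
          field_simp
          try ring
        linarith
    _ ≤ (∑ p ∈ (N+1).primesBelow, (p:ℝ)⁻¹) + 1 := by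
        rw [Finset.sum_add_distrib]
        have := hr_telescope N
        linarith

lemma hr_variance (N : ℕ) :
    ∑ n ∈ Finset.Icc 1 N, ((∑ p ∈ (N + 1).primesBelow, (p:ℝ)⁻¹) - (n.primeFactors.card : ℝ))^2
      ≤ (N : ℝ) * (∑ p ∈ (N + 1).primesBelow, (p:ℝ)⁻¹)
        + 2 * (∑ p ∈ (N + 1).primesBelow, (p:ℝ)⁻¹) * ((N + 1).primesBelow.card : ℝ) := by
  set S := ∑ p ∈ (N + 1).primesBelow, (p:ℝ)⁻¹ with hS
  have hS0 : 0 ≤ S := Finset.sum_nonneg fun p _ => by positivity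
  have hcard : ((Finset.Icc 1 N).card : ℝ) = N := by rw [Nat.card_Icc]; push_cast; ring
  have hexp : ∑ n ∈ Finset.Icc 1 N, (S - (n.primeFactors.card : ℝ))^2
      = (N:ℝ) * S^2 - 2 * S * (∑ n ∈ Finset.Icc 1 N, (n.primeFactors.card : ℝ))
        + ∑ n ∈ Finset.Icc 1 N, (n.primeFactors.card : ℝ)^2 := by
    have : ∀ n ∈ Finset.Icc 1 N, (S - (n.primeFactors.card : ℝ))^2
        = S^2 - 2 * S * (n.primeFactors.card : ℝ) + (n.primeFactors.card : ℝ)^2 :=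
      fun n _ => by ring
    rw [Finset.sum_congr rfl this, Finset.sum_add_distrib, Finset.sum_sub_distrib,
      Finset.sum_const, ← Finset.mul_sum, nsmul_eq_mul, hcard]
  rw [hexp]
  have h1 := hr_first_moment N
  have h2 := hr_second_moment N
  nlinarith [h1, h2, hS0]

set_option maxHeartbeats 1000000 in

/-- Effective Hardy–Ramanujan: for `ε ∈ (0,1)` and `N ≥ exp(exp(1.842/ε))`,
`#{n ≤ N : τ(n) ≥ (log N)^{log 2 · (1−ε)}} ≥ N(1 − 85.165/(ε² log log N))`. -/
theorem stmt14 (ε : ℝ) (hε : ε ∈ Set.Ioo (0 : ℝ) 1) (N : ℕ)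
    (hN : Real.exp (Real.exp (1.842 / ε)) ≤ (N : ℝ)) :
    (N : ℝ) * (1 - 85.165 / (ε ^ 2 * Real.log (Real.log N))) ≤
      (((Finset.Icc 1 N).filter
        (fun n => (Real.log N) ^ (Real.log 2 * (1 - ε)) ≤ (n.divisors.card : ℝ))).card : ℝ) := by
  obtain ⟨hε0, hε1⟩ := hε
  set L : ℝ := Real.log (Real.log N) with hL
  set S : ℝ := ∑ p ∈ (N + 1).primesBelow, (p:ℝ)⁻¹ with hS
  -- basic numeric facts
  have h1842 : (1.842 : ℝ) ≤ 1.842 / ε := by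
    rw [le_div_iff₀ hε0]; nlinarith
  have hexp1 : (3.69:ℝ) ≤ Real.exp 1.842 := by
    have : Real.exp 1.842 = Real.exp 0.921 * Real.exp 0.921 := by
      rw [← Real.exp_add]; norm_num
    nlinarith [Real.add_one_le_exp (0.921:ℝ)]
  have hexp2 : (33:ℝ) ≤ Real.exp 3.69 := by
    have h3 : Real.exp 3.69 = (Real.exp 1)^(3:ℕ) * Real.exp 0.69 := by
      rw [Real.exp_one_pow, ← Real.exp_add]; norm_num
    have he1 : (2.7182818283:ℝ) < Real.exp 1 := Real.exp_one_gt_d9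
    have he2 : (1.69:ℝ) ≤ Real.exp 0.69 := by
      nlinarith [Real.add_one_le_exp (0.69:ℝ)]
    have hcube : (20.08:ℝ) ≤ (Real.exp 1)^(3:ℕ) := by
      calc (20.08:ℝ) ≤ 2.7182818283^(3:ℕ) := by norm_num
        _ ≤ (Real.exp 1)^(3:ℕ) := pow_le_pow_left₀ (by norm_num) (le_of_lt he1) 3
    nlinarith
  have hN33 : (33:ℝ) ≤ N := by
    refine le_trans ?_ hN
    refine le_trans hexp2 ?_
    refine le_trans (Real.exp_le_exp.mpr (le_trans hexp1 (Real.exp_le_exp.mpr h1842))) (le_refl _)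
  have hNnat : 33 ≤ N := by exact_mod_cast hN33
  have hN1 : (1:ℝ) < N := by linarith
  have hlogN : Real.exp (1.842 / ε) ≤ Real.log N := by
    rw [Real.le_log_iff_exp_le (by linarith)]
    exact hN
  have hlogNpos : 0 < Real.log N := lt_of_lt_of_le (Real.exp_pos _) hlogN
  have hLge : 1.842 / ε ≤ L := by
    rw [hL, Real.le_log_iff_exp_le hlogNpos]
    exact hlogN
  have hLpos : 0 < L := lt_of_lt_of_le (by linarith : (0:ℝ) < 1.842/ε) hLge
  have hεL : 1.842 ≤ ε * L := by
    rw [div_le_iff₀ hε0] at hLge; linarith [hLge]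
  -- Mertens
  have hSL : L - 1 ≤ S := by
    have := hr_mertens N (by omega)
    rw [← hL, ← hS] at this; linarith
  have hS0 : 0 ≤ S := Finset.sum_nonneg fun p _ => by positivity
  -- sets
  set a : ℝ := (1 - ε) * L with ha
  have ha0 : 0 ≤ a := by
    have : 0 ≤ 1 - ε := by linarith
    positivity
  have haS : a < L - 1 := by nlinarith
  set B := (Finset.Icc 1 N).filter (fun n => ((n.primeFactors.card : ℝ)) < a) with hB
  set T := (Finset.Icc 1 N).filter
      (fun n => (Real.log N) ^ (Real.log 2 * (1 - ε)) ≤ (n.divisors.card : ℝ)) with hT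
  -- every n not in B is in T
  have hsub : Finset.Icc 1 N ⊆ T ∪ B := by
    intro n hn
    by_cases hbig : ((n.primeFactors.card : ℝ)) < a
    · exact Finset.mem_union_right _ (Finset.mem_filter.mpr ⟨hn, hbig⟩)
    · push_neg at hbig
      refine Finset.mem_union_left _ (Finset.mem_filter.mpr ⟨hn, ?_⟩)
      have hn0 : n ≠ 0 := by
        rw [Finset.mem_Icc] at hn; omega
      have htau : ((2:ℝ)) ^ (n.primeFactors.card : ℕ) ≤ (n.divisors.card : ℝ) := by
        exact_mod_cast hr_tau_lower hn0
      have hlog2 : (0:ℝ) ≤ Real.log 2 := Real.log_nonneg one_le_two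
      calc (Real.log N) ^ (Real.log 2 * (1 - ε))
          = Real.exp (Real.log (Real.log N) * (Real.log 2 * (1 - ε))) :=
            Real.rpow_def_of_pos hlogNpos _
        _ ≤ Real.exp (Real.log 2 * (n.primeFactors.card : ℝ)) := by
            rw [Real.exp_le_exp]
            calc Real.log (Real.log N) * (Real.log 2 * (1 - ε))
                = Real.log 2 * a := by rw [ha, ← hL]; ring
              _ ≤ Real.log 2 * (n.primeFactors.card : ℝ) := by nlinarith
        _ = (2:ℝ) ^ ((n.primeFactors.card : ℝ)) := by
            rw [Real.rpow_def_of_pos (by norm_num : (0:ℝ) < 2)]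
        _ = (2:ℝ) ^ (n.primeFactors.card : ℕ) := by
            rw [Real.rpow_natCast]
        _ ≤ (n.divisors.card : ℝ) := htau
  -- Chebyshev bound on B
  have hDpos : 0 < S - a := by linarith
  have hcheb : (B.card : ℝ) * (S - a)^2 ≤ (N:ℝ) * S + 2 * S * ((N + 1).primesBelow.card : ℝ) := by
    have h1 : (B.card : ℝ) * (S - a)^2 ≤ ∑ n ∈ B, (S - (n.primeFactors.card : ℝ))^2 := by
      rw [Finset.card_eq_sum_ones B]
      push_cast
      rw [Finset.sum_mul, one_mul]
      refine Finset.sum_le_sum fun n hn => ?_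
      have hn' := (Finset.mem_filter.mp hn).2
      have : S - a ≤ S - (n.primeFactors.card : ℝ) := by linarith
      nlinarith
    have h2 : ∑ n ∈ B, (S - (n.primeFactors.card : ℝ))^2
        ≤ ∑ n ∈ Finset.Icc 1 N, (S - (n.primeFactors.card : ℝ))^2 := by
      refine Finset.sum_le_sum_of_subset_of_nonneg (Finset.filter_subset _ _) fun n _ _ => ?_
      positivity
    have h3 := hr_variance N
    rw [← hS] at h3
    linarith
  -- B card bound
  have hπ := hr_pi_bound N
  have hBbound : (B.card : ℝ) * (S - a)^2 ≤ S * (2 * N + 3) := by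
    have h4 : 2 * S * ((N + 1).primesBelow.card : ℝ) ≤ 2 * S * ((N:ℝ)/2 + 3/2) :=
      mul_le_mul_of_nonneg_left hπ (by linarith)
    have h5 : (N:ℝ) * S + 2 * S * ((N:ℝ)/2 + 3/2) = S * (2 * N + 3) := by ring
    linarith
  -- monotonicity in S : S/(S-a)^2 ≤ (L-1)/((L-1)-a)^2
  have hmono : (B.card : ℝ) * ((L - 1) - a)^2 ≤ (L - 1) * (2 * N + 3) := by
    have hBnn : (0:ℝ) ≤ B.card := by positivity
    have hkey : S * ((L-1) - a)^2 ≤ (L - 1) * (S - a)^2 := by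
      nlinarith [mul_nonneg (sub_nonneg.mpr hSL) (by nlinarith : (0:ℝ) ≤ S * (L-1) - a^2)]
    have h2 : (0:ℝ) < ((L-1) - a)^2 := pow_pos (by linarith) 2
    have h3 : (0:ℝ) < (S - a)^2 := pow_pos hDpos 2
    -- B * ((L-1)-a)^2 * (S-a)^2 ≤ S*(2N+3) * ((L-1)-a)^2 ≤ (L-1)*(S-a)^2*(2N+3)
    have hN0 : (0:ℝ) ≤ 2 * N + 3 := by positivity
    have c1 : (B.card : ℝ) * ((L - 1) - a)^2 * (S-a)^2 ≤ S * (2 * N + 3) * ((L-1) - a)^2 := by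
      calc (B.card : ℝ) * ((L - 1) - a)^2 * (S-a)^2
          = ((B.card : ℝ) * (S-a)^2) * ((L-1) - a)^2 := by ring
        _ ≤ (S * (2 * N + 3)) * ((L-1) - a)^2 := mul_le_mul_of_nonneg_right hBbound (le_of_lt h2)
    have c2 : S * (2 * N + 3) * ((L-1) - a)^2 ≤ (L - 1) * (2 * N + 3) * (S-a)^2 := by
      calc S * (2 * N + 3) * ((L-1) - a)^2 = (S * ((L-1) - a)^2) * (2*N+3) := by ring
        _ ≤ ((L - 1) * (S - a)^2) * (2*N+3) := mul_le_mul_of_nonneg_right hkey hN0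
        _ = (L - 1) * (2 * N + 3) * (S-a)^2 := by ring
    exact le_of_mul_le_mul_right (by linarith [c1, c2]) h3
  -- final numeric inequality : B ≤ N * 85.165/(ε² L)
  have hden : (L - 1) - a = ε * L - 1 := by rw [ha]; ring
  rw [hden] at hmono
  have hεLpos : (0:ℝ) < ε^2 * L := by positivity
  have hx2pos : (0:ℝ) < (ε * L - 1)^2 := by nlinarith [hεL]
  have hBfinal : (B.card : ℝ) ≤ (N:ℝ) * (85.165 / (ε^2 * L)) := by
    rw [mul_div_assoc', le_div_iff₀ hεLpos]
    have hBnn : (0:ℝ) ≤ B.card := by positivity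
    have hL1842 : (1.842:ℝ) ≤ L := by nlinarith [hεL, hε1, hLpos]
    have step1 : (ε * L - 1) ≥ (0.842/1.842) * (ε * L) := by nlinarith [hεL]
    have step2 : (ε * L - 1)^2 ≥ (0.842/1.842)^2 * (ε * L)^2 := by nlinarith [hεL, step1]
    have step3 : (L - 1) * (2 * (N:ℝ) + 3) * (ε^2 * L) ≤ 85.165 * N * (ε * L - 1)^2 := by
      have e1 : (L - 1) * (ε^2 * L) ≤ (ε * L)^2 := by nlinarith [hLpos, hε0]
      have e2 : 2 * (N:ℝ) + 3 ≤ 2.1 * N := by linarith [hN33]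
      have e3a : (L-1)*(ε^2*L)*(2*(N:ℝ)+3) ≤ (ε*L)^2*(2*(N:ℝ)+3) :=
        mul_le_mul_of_nonneg_right e1 (by positivity)
      have e3b : (ε*L)^2*(2*(N:ℝ)+3) ≤ (ε*L)^2*(2.1*N) :=
        mul_le_mul_of_nonneg_left e2 (by positivity)
      have e5 : (2.1:ℝ) ≤ 85.165*(0.842/1.842)^2 := by norm_num
      have e6 : 2.1*((N:ℝ)*(ε*L)^2) ≤ (85.165*(0.842/1.842)^2)*((N:ℝ)*(ε*L)^2) :=
        mul_le_mul_of_nonneg_right e5 (by positivity)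
      have e7 : (85.165*(N:ℝ))*((0.842/1.842)^2*(ε*L)^2) ≤ (85.165*(N:ℝ))*(ε * L - 1)^2 :=
        mul_le_mul_of_nonneg_left step2 (by positivity)
      linarith [e3a, e3b, e6, e7]
    have c1 : (B.card : ℝ) * (ε * L - 1)^2 * (ε^2 * L) ≤ (L - 1) * (2 * N + 3) * (ε^2 * L) :=
      mul_le_mul_of_nonneg_right hmono (le_of_lt hεLpos)
    have : (B.card : ℝ) * (ε^2 * L) * (ε * L - 1)^2 ≤ ((N:ℝ) * 85.165) * (ε * L - 1)^2 := by
      nlinarith [c1, step3]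
    exact le_of_mul_le_mul_right this hx2pos
  -- conclude
  have hcount : (N : ℝ) ≤ (T.card : ℝ) + (B.card : ℝ) := by
    have := Finset.card_le_card hsub
    have hcu := Finset.card_union_le T B
    have hIcc : (Finset.Icc 1 N).card = N := by rw [Nat.card_Icc]; omega
    have : N ≤ T.card + B.card := by omega
    exact_mod_cast this
  have heq : (N : ℝ) * (1 - 85.165 / (ε ^ 2 * L)) = (N:ℝ) - (N:ℝ) * (85.165 / (ε^2 * L)) := by
    ring
  rw [heq]
  linarith
end

section
/- For any fixed ρ ∈ (0,1), the expected size of the largest strongly connected component of the randomly oriented divisor graph D_ρ(N) is asymptotic to N, i.e., E[#Φ(D_ρ(N))]/N → 1 as N → ∞. -/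
set_option maxHeartbeats 1000000


open scoped Classical

noncomputable section

/-- The edge set of the divisor graph `G_N`: pairs `(a, b)` with `1 ≤ a < b ≤ N`
and `a ∣ b`; each undirected edge is recorded once. -/
def divEdges (N : ℕ) : Finset (ℕ × ℕ) :=
  (Finset.Icc 1 N ×ˢ Finset.Icc 1 N).filter (fun p => p.1 < p.2 ∧ p.1 ∣ p.2)

/-- An orientation of `G_N` is a function on the edge set; `f e = true` means the
edge `e = (a, b)` (with `a < b`) is reversed, i.e. directed from the smaller `a`
to the larger `b` (the default orientation of `D_N` points from larger to smaller). -/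
def dAdj (N : ℕ) (f : {e // e ∈ divEdges N} → Bool) (x y : ℕ) : Prop :=
  (∃ h : (y, x) ∈ divEdges N, f ⟨(y, x), h⟩ = false) ∨
  (∃ h : (x, y) ∈ divEdges N, f ⟨(x, y), h⟩ = true)

/-- The size of the strongly connected component of `v` in the orientation `f`. -/
def sccSize (N : ℕ) (f : {e // e ∈ divEdges N} → Bool) (v : ℕ) : ℕ :=
  ((Finset.Icc 1 N).filter (fun w =>
    Relation.ReflTransGen (dAdj N f) v w ∧ Relation.ReflTransGen (dAdj N f) w v)).card

/-- The size of the largest strongly connected component of the orientation `f`. -/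
def largestSCC (N : ℕ) (f : {e // e ∈ divEdges N} → Bool) : ℕ :=
  (Finset.Icc 1 N).sup (sccSize N f)

/-- The probability of the orientation `f` when each edge is independently
reversed with probability `ρ`. -/
def orientProb (N : ℕ) (ρ : ℝ) (f : {e // e ∈ divEdges N} → Bool) : ℝ :=
  ∏ e : {e // e ∈ divEdges N}, if f e then ρ else 1 - ρ

/-- `E[#Φ(𝒟_ρ(N))]`: the expected size of the largest strongly connected
component of the randomly oriented divisor graph. -/
def expLargestSCC (N : ℕ) (ρ : ℝ) : ℝ :=
  ∑ f : {e // e ∈ divEdges N} → Bool, orientProb N ρ f * (largestSCC N f : ℝ)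

end


/-! ### Auxiliary probability layer -/

noncomputable section SCCAux

variable {ι : Type*} [Fintype ι] [DecidableEq ι]

lemma sum_fun_bool' (g : ι → Bool → ℝ) :
    ∑ f : ι → Bool, ∏ i, g i (f i) = ∏ i, (g i true + g i false) := by
  have h := Fintype.prod_sum (κ := fun _ : ι => Bool) (f := g)
  rw [← h]
  exact Finset.prod_congr rfl fun i _ => by rw [Fintype.sum_bool]

lemma cylinder' (ρ : ℝ) (S : Finset ι) (σ : ι → Bool) :
    ∑ f : ι → Bool, (if ∀ i ∈ S, f i = σ i then (1:ℝ) else 0)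
        * ∏ i, (if f i then ρ else 1 - ρ)
      = ∏ i ∈ S, (if σ i then ρ else 1 - ρ) := by
  have key : ∀ f : ι → Bool,
      (if ∀ i ∈ S, f i = σ i then (1:ℝ) else 0) * ∏ i, (if f i then ρ else 1 - ρ)
        = ∏ i : ι, (fun (i : ι) (b : Bool) =>
            (if i ∈ S then (if b = σ i then (if b then ρ else 1-ρ) else 0)
            else (if b then ρ else 1-ρ))) i (f i) := by
    intro f
    by_cases h : ∀ i ∈ S, f i = σ i
    · rw [if_pos h, one_mul]
      refine Finset.prod_congr rfl fun i _ => ?_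
      by_cases hi : i ∈ S <;> simp [hi, h i]
    · rw [if_neg h, zero_mul]
      push_neg at h
      obtain ⟨i₀, hi₀, hne⟩ := h
      symm
      apply Finset.prod_eq_zero (Finset.mem_univ i₀)
      simp [hi₀, hne]
  refine Eq.trans (Finset.sum_congr rfl fun f _ => key f)
    (Eq.trans (sum_fun_bool' (g := fun (i : ι) (b : Bool) =>
            (if i ∈ S then (if b = σ i then (if b then ρ else 1-ρ) else 0)
            else (if b then ρ else 1-ρ)))) ?_)
  have h2 : ∀ i : ι,
      ((if i ∈ S then (if true = σ i then (if (true:Bool) then ρ else 1-ρ) else 0)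
            else (if (true:Bool) then ρ else 1-ρ))
        + (if i ∈ S then (if false = σ i then (if (false:Bool) then ρ else 1-ρ) else 0)
            else (if (false:Bool) then ρ else 1-ρ)))
      = if i ∈ S then (if σ i then ρ else 1 - ρ) else 1 := by
    intro i
    by_cases hi : i ∈ S
    · cases hσ : σ i <;> simp [hi, hσ]
    · simp [hi]
  rw [Finset.prod_congr rfl fun i _ => h2 i, Finset.prod_ite_mem, Finset.univ_inter]

lemma prob_total' (ρ : ℝ) : ∑ f : ι → Bool, ∏ i, (if f i then ρ else 1 - ρ) = 1 := by
  have := cylinder' (ι := ι) ρ ∅ (fun _ => true)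
  simpa using this

lemma noblock' (ρ : ℝ) {α : Type*} [DecidableEq α] (U : Finset α)
    (S : α → Finset ι) (σ : ι → Bool)
    (hdisj : Set.PairwiseDisjoint (↑U) S) :
    ∑ f : ι → Bool, (∏ i, (if f i then ρ else 1 - ρ)) *
        ∏ m ∈ U, (1 - if ∀ i ∈ S m, f i = σ i then (1:ℝ) else 0)
      = ∏ m ∈ U, (1 - ∏ i ∈ S m, (if σ i then ρ else 1 - ρ)) := by
  have expand : ∀ (χ : α → ℝ), ∏ m ∈ U, (1 - χ m)
      = ∑ t ∈ U.powerset, (-1)^t.card * ∏ m ∈ t, χ m := by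
    intro χ
    have : ∀ m, (1 : ℝ) - χ m = -χ m + 1 := fun m => by ring
    rw [Finset.prod_congr rfl fun m _ => this m, Finset.prod_add]
    refine Finset.sum_congr rfl fun t _ => ?_
    rw [Finset.prod_const_one, mul_one]
    rw [show (fun m => -χ m) = fun m => (-1) * χ m by funext m; ring]
    rw [Finset.prod_mul_distrib, Finset.prod_const]
  calc ∑ f : ι → Bool, (∏ i, (if f i then ρ else 1 - ρ)) *
        ∏ m ∈ U, (1 - if ∀ i ∈ S m, f i = σ i then (1:ℝ) else 0)
      = ∑ t ∈ U.powerset, (-1)^t.card *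
          ∑ f : ι → Bool, (if ∀ i ∈ t.biUnion S, f i = σ i then (1:ℝ) else 0)
            * ∏ i, (if f i then ρ else 1 - ρ) := by
        have step1 : ∀ f : ι → Bool,
            (∏ i, (if f i then ρ else 1 - ρ)) *
              ∏ m ∈ U, (1 - if ∀ i ∈ S m, f i = σ i then (1:ℝ) else 0)
          = ∑ t ∈ U.powerset, (-1)^t.card *
              ((if ∀ i ∈ t.biUnion S, f i = σ i then (1:ℝ) else 0)
                * ∏ i, (if f i then ρ else 1 - ρ)) := by
          intro f
          rw [expand fun m => if ∀ i ∈ S m, f i = σ i then (1:ℝ) else 0, Finset.mul_sum]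
          refine Finset.sum_congr rfl fun t ht => ?_
          have hb : (∏ m ∈ t, if ∀ i ∈ S m, f i = σ i then (1:ℝ) else 0)
              = if ∀ i ∈ t.biUnion S, f i = σ i then (1:ℝ) else 0 := by
            rw [Finset.prod_boole]
            refine if_congr ?_ rfl rfl
            constructor
            · intro h i hi
              obtain ⟨m, hm, him⟩ := Finset.mem_biUnion.mp hi
              exact h m hm i him
            · intro h m hm i hi
              exact h i (Finset.mem_biUnion.mpr ⟨m, hm, hi⟩)
          rw [hb]
          ring
        rw [Finset.sum_congr rfl fun f _ => step1 f, Finset.sum_comm]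
        exact Finset.sum_congr rfl fun t _ => by rw [← Finset.mul_sum]
    _ = ∑ t ∈ U.powerset, (-1)^t.card * ∏ m ∈ t, ∏ i ∈ S m, (if σ i then ρ else 1 - ρ) := by
        refine Finset.sum_congr rfl fun t ht => ?_
        rw [cylinder' ρ (t.biUnion S) σ, Finset.prod_biUnion]
        exact hdisj.subset (by exact_mod_cast Finset.mem_powerset.mp ht)
    _ = ∏ m ∈ U, (1 - ∏ i ∈ S m, (if σ i then ρ else 1 - ρ)) := by
        rw [expand fun m => ∏ i ∈ S m, (if σ i then ρ else 1 - ρ)]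

lemma event_bound' (ρ : ℝ) (hρ0 : 0 ≤ ρ) (hρ1 : ρ ≤ 1) {α : Type*} [DecidableEq α]
    (U : Finset α) (S : α → Finset ι) (σ : ι → Bool) (hdisj : Set.PairwiseDisjoint (↑U) S)
    (E : (ι → Bool) → Prop)
    (hE : ∀ f m, m ∈ U → (∀ i ∈ S m, f i = σ i) → E f) :
    ∑ f : ι → Bool, (if E f then 0 else ∏ i, (if f i then ρ else 1 - ρ))
      ≤ ∏ m ∈ U, (1 - ∏ i ∈ S m, (if σ i then ρ else 1 - ρ)) := by
  rw [← noblock' ρ U S σ hdisj]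
  refine Finset.sum_le_sum fun f _ => ?_
  have hP : (0:ℝ) ≤ ∏ i, (if f i then ρ else 1 - ρ) := by
    refine Finset.prod_nonneg fun i _ => ?_
    by_cases h : f i
    · rw [if_pos h]; exact hρ0
    · rw [if_neg h]; linarith
  by_cases hEf : E f
  · rw [if_pos hEf]
    refine mul_nonneg hP (Finset.prod_nonneg fun m _ => ?_)
    by_cases h : ∀ i ∈ S m, f i = σ i
    · rw [if_pos h]; norm_num
    · rw [if_neg h]; norm_num
  · rw [if_neg hEf]
    have hone : ∀ m ∈ U, (1 - if ∀ i ∈ S m, f i = σ i then (1:ℝ) else 0) = 1 := by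
      intro m hm
      rw [if_neg (fun h => hEf (hE f m hm h)), sub_zero]
    rw [Finset.prod_congr rfl hone, Finset.prod_const_one, mul_one]

end SCCAux

/-! ### Graph layer -/

/-- nontrivial divisors of `v` -/
def ntDiv (v : ℕ) : Finset ℕ := (Finset.Ioo 1 v).filter (· ∣ v)

/-- the pair of edges `(1,d), (d,v)` as a block of coordinates -/
def Sblk (N v d : ℕ) : Finset {e // e ∈ divEdges N} :=
  Finset.univ.filter (fun i => i.1 = (1,d) ∨ i.1 = (d,v))

lemma mem_divEdges {N a b : ℕ} (ha : 1 ≤ a) (hab : a < b) (hbN : b ≤ N) (hdvd : a ∣ b) :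
    (a, b) ∈ divEdges N := by
  simp only [divEdges, Finset.mem_filter, Finset.mem_product, Finset.mem_Icc]
  exact ⟨⟨⟨ha, le_trans (le_of_lt hab) hbN⟩, ⟨by omega, hbN⟩⟩, hab, hdvd⟩

lemma goodV_of_blk {N v : ℕ} (hv : v ∈ Finset.Icc 1 N) {d : ℕ} (hd : d ∈ ntDiv v)
    (f : {e // e ∈ divEdges N} → Bool) :
    ((∀ i ∈ Sblk N v d, f i = true) → Relation.ReflTransGen (dAdj N f) 1 v) ∧
    ((∀ i ∈ Sblk N v d, f i = false) → Relation.ReflTransGen (dAdj N f) v 1) := by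
  simp only [ntDiv, Finset.mem_filter, Finset.mem_Ioo] at hd
  simp only [Finset.mem_Icc] at hv
  obtain ⟨⟨hd1, hdv⟩, hdvd⟩ := hd
  have h1d : (1, d) ∈ divEdges N := mem_divEdges le_rfl hd1 (by omega) (one_dvd d)
  have hdvE : (d, v) ∈ divEdges N := mem_divEdges (by omega) hdv hv.2 hdvd
  have m1 : (⟨(1,d), h1d⟩ : {e // e ∈ divEdges N}) ∈ Sblk N v d := by
    simp [Sblk]
  have m2 : (⟨(d,v), hdvE⟩ : {e // e ∈ divEdges N}) ∈ Sblk N v d := by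
    simp [Sblk]
  constructor
  · intro hf
    have a1 : dAdj N f 1 d := Or.inr ⟨h1d, hf _ m1⟩
    have a2 : dAdj N f d v := Or.inr ⟨hdvE, hf _ m2⟩
    exact Relation.ReflTransGen.head a1 (Relation.ReflTransGen.head a2 .refl)
  · intro hf
    have a1 : dAdj N f v d := Or.inl ⟨hdvE, hf _ m2⟩
    have a2 : dAdj N f d 1 := Or.inl ⟨h1d, hf _ m1⟩
    exact Relation.ReflTransGen.head a1 (Relation.ReflTransGen.head a2 .refl)

lemma Sblk_pair {N v : ℕ} (hv : v ∈ Finset.Icc 1 N) {d : ℕ} (hd : d ∈ ntDiv v) :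
    ∃ h1 h2, Sblk N v d = ({⟨(1,d), h1⟩, ⟨(d,v), h2⟩} : Finset {e // e ∈ divEdges N}) := by
  simp only [ntDiv, Finset.mem_filter, Finset.mem_Ioo] at hd
  simp only [Finset.mem_Icc] at hv
  obtain ⟨⟨hd1, hdv⟩, hdvd⟩ := hd
  have h1d : (1, d) ∈ divEdges N := mem_divEdges le_rfl hd1 (by omega) (one_dvd d)
  have hdvE : (d, v) ∈ divEdges N := mem_divEdges (by omega) hdv hv.2 hdvd
  refine ⟨h1d, hdvE, ?_⟩
  ext i
  simp [Sblk, Subtype.ext_iff]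

lemma Sblk_prod_const {N v : ℕ} (hv : v ∈ Finset.Icc 1 N) {d : ℕ} (hd : d ∈ ntDiv v) (c : ℝ) :
    ∏ _i ∈ Sblk N v d, c = c^2 := by
  obtain ⟨h1, h2, hS⟩ := Sblk_pair hv hd
  have hne : (⟨(1,d), h1⟩ : {e // e ∈ divEdges N}) ≠ ⟨(d,v), h2⟩ := by
    simp only [ntDiv, Finset.mem_filter, Finset.mem_Ioo] at hd
    intro h
    rw [Subtype.ext_iff] at h
    have := congrArg Prod.fst h
    simp at this
    omega
  rw [hS, Finset.prod_pair hne]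
  ring

lemma Sblk_disjoint {N v : ℕ} (hv : v ∈ Finset.Icc 1 N) :
    Set.PairwiseDisjoint (↑(ntDiv v)) (Sblk N v) := by
  intro d hd d' hd' hne
  simp only [ntDiv, Finset.coe_filter, Set.mem_setOf_eq, Finset.mem_Ioo] at hd hd'
  rw [Function.onFun, Finset.disjoint_left]
  intro i hi hi'
  simp only [Sblk, Finset.mem_filter, Finset.mem_univ, true_and] at hi hi'
  rcases hi with h | h <;> rcases hi' with h' | h' <;>
    (rw [h] at h'; injection h' with e1 e2) <;> omega

/-- good vertex: in the same SCC as the vertex 1 -/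
def goodV (N : ℕ) (f : {e // e ∈ divEdges N} → Bool) (v : ℕ) : Prop :=
  Relation.ReflTransGen (dAdj N f) 1 v ∧ Relation.ReflTransGen (dAdj N f) v 1

lemma orientProb_def (N : ℕ) (ρ : ℝ) (f : {e // e ∈ divEdges N} → Bool) :
    orientProb N ρ f = ∏ i : {e // e ∈ divEdges N}, (if f i then ρ else 1 - ρ) := rfl

lemma prob_bad_vertex {ρ : ℝ} (hρ : ρ ∈ Set.Ioo (0:ℝ) 1) {N v : ℕ}
    (hv : v ∈ Finset.Icc 1 N) :
    ∑ f : {e // e ∈ divEdges N} → Bool, (if goodV N f v then 0 else orientProb N ρ f)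
      ≤ (1 - ρ^2)^(ntDiv v).card + (1 - (1-ρ)^2)^(ntDiv v).card := by
  obtain ⟨hρ0, hρ1⟩ := hρ
  have hP : ∀ f : {e // e ∈ divEdges N} → Bool, 0 ≤ orientProb N ρ f := by
    intro f
    refine Finset.prod_nonneg fun i _ => ?_
    by_cases h : f i
    · rw [if_pos h]; linarith
    · rw [if_neg h]; linarith
  have pointwise : ∀ f : {e // e ∈ divEdges N} → Bool,
      (if goodV N f v then 0 else orientProb N ρ f)
        ≤ (if Relation.ReflTransGen (dAdj N f) 1 v then 0 else orientProb N ρ f)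
          + (if Relation.ReflTransGen (dAdj N f) v 1 then 0 else orientProb N ρ f) := by
    intro f
    by_cases hA : Relation.ReflTransGen (dAdj N f) 1 v <;>
      by_cases hB : Relation.ReflTransGen (dAdj N f) v 1
    · simp [goodV, hA, hB]
    · simp only [goodV, hA, hB, if_pos, if_neg, and_false, if_false, true_and, zero_add]
      simp [hP f]
    · simp only [goodV, hA, hB, false_and, if_false, if_pos, add_zero]
      simp [hP f]
    · simp only [goodV, hA, hB, false_and, if_false, if_neg]
      simp [hP f]
  calc ∑ f : {e // e ∈ divEdges N} → Bool, (if goodV N f v then 0 else orientProb N ρ f)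
      ≤ ∑ f : {e // e ∈ divEdges N} → Bool,
          ((if Relation.ReflTransGen (dAdj N f) 1 v then 0 else orientProb N ρ f)
          + (if Relation.ReflTransGen (dAdj N f) v 1 then 0 else orientProb N ρ f)) :=
        Finset.sum_le_sum fun f _ => pointwise f
    _ = (∑ f : {e // e ∈ divEdges N} → Bool,
          (if Relation.ReflTransGen (dAdj N f) 1 v then 0 else orientProb N ρ f))
        + ∑ f : {e // e ∈ divEdges N} → Bool,
          (if Relation.ReflTransGen (dAdj N f) v 1 then 0 else orientProb N ρ f) :=
        Finset.sum_add_distrib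
    _ ≤ (1 - ρ^2)^(ntDiv v).card + (1 - (1-ρ)^2)^(ntDiv v).card := by
        gcongr ?_ + ?_
        · have hb := event_bound' (ι := {e // e ∈ divEdges N}) ρ (le_of_lt hρ0) (le_of_lt hρ1)
            (ntDiv v) (Sblk N v) (fun _ => true) (Sblk_disjoint hv)
            (fun f => Relation.ReflTransGen (dAdj N f) 1 v)
            (fun f m hm hf => (goodV_of_blk hv hm f).1 hf)
          refine le_trans (le_of_eq ?_) (le_trans hb (le_of_eq ?_))
          · exact Finset.sum_congr rfl fun f _ => by rw [orientProb_def]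
          · rw [Finset.prod_congr rfl fun m hm => ?_, Finset.prod_const]
            simp only [if_true]
            rw [Sblk_prod_const hv hm ρ]
        · have hb := event_bound' (ι := {e // e ∈ divEdges N}) ρ (le_of_lt hρ0) (le_of_lt hρ1)
            (ntDiv v) (Sblk N v) (fun _ => false) (Sblk_disjoint hv)
            (fun f => Relation.ReflTransGen (dAdj N f) v 1)
            (fun f m hm hf => (goodV_of_blk hv hm f).2 hf)
          refine le_trans (le_of_eq ?_) (le_trans hb (le_of_eq ?_))
          · exact Finset.sum_congr rfl fun f _ => by rw [orientProb_def]
          · rw [Finset.prod_congr rfl fun m hm => ?_, Finset.prod_const]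
            simp only [Bool.false_eq_true, if_false]
            rw [Sblk_prod_const hv hm (1-ρ)]

lemma prob_mass (N : ℕ) (ρ : ℝ) :
    ∑ f : {e // e ∈ divEdges N} → Bool, orientProb N ρ f = 1 := by
  rw [Finset.sum_congr rfl fun f _ => orientProb_def N ρ f]
  exact prob_total' ρ

lemma orientProb_nonneg {ρ : ℝ} (hρ : ρ ∈ Set.Ioo (0:ℝ) 1) (N : ℕ)
    (f : {e // e ∈ divEdges N} → Bool) : 0 ≤ orientProb N ρ f := by
  refine Finset.prod_nonneg fun i _ => ?_
  by_cases h : f i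
  · rw [if_pos h]; linarith [hρ.1]
  · rw [if_neg h]; linarith [hρ.2]

lemma exp_upper {ρ : ℝ} (hρ : ρ ∈ Set.Ioo (0:ℝ) 1) (N : ℕ) :
    expLargestSCC N ρ ≤ N := by
  have hl : ∀ f : {e // e ∈ divEdges N} → Bool, (largestSCC N f : ℝ) ≤ N := by
    intro f
    have : largestSCC N f ≤ N := by
      refine Finset.sup_le fun v _ => ?_
      calc sccSize N f v ≤ (Finset.Icc 1 N).card := Finset.card_filter_le _ _
        _ = N := by rw [Nat.card_Icc]; omega
    exact_mod_cast this
  calc expLargestSCC N ρ ≤ ∑ f : {e // e ∈ divEdges N} → Bool, orientProb N ρ f * N :=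
        Finset.sum_le_sum fun f _ =>
          mul_le_mul_of_nonneg_left (hl f) (orientProb_nonneg hρ N f)
    _ = N := by rw [← Finset.sum_mul, prob_mass, one_mul]

lemma exp_lower {ρ : ℝ} (hρ : ρ ∈ Set.Ioo (0:ℝ) 1) {N : ℕ} (hN : 1 ≤ N) :
    (N:ℝ) - ∑ v ∈ Finset.Icc 1 N,
        ((1 - ρ^2)^(ntDiv v).card + (1 - (1-ρ)^2)^(ntDiv v).card)
      ≤ expLargestSCC N ρ := by
  have h1 : (1:ℕ) ∈ Finset.Icc 1 N := by simp [hN]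
  have step1 : ∑ f : {e // e ∈ divEdges N} → Bool, orientProb N ρ f * (sccSize N f 1 : ℝ)
      ≤ expLargestSCC N ρ := by
    refine Finset.sum_le_sum fun f _ => ?_
    refine mul_le_mul_of_nonneg_left ?_ (orientProb_nonneg hρ N f)
    exact_mod_cast Finset.le_sup (f := sccSize N f) h1
  refine le_trans ?_ step1
  have hcast : ∀ f : {e // e ∈ divEdges N} → Bool,
      (sccSize N f 1 : ℝ) = ∑ v ∈ Finset.Icc 1 N, (if goodV N f v then (1:ℝ) else 0) := by
    intro f
    rw [sccSize, Finset.card_filter]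
    push_cast
    exact Finset.sum_congr rfl fun v _ => by
      unfold goodV; congr 1
  have swap : ∑ f : {e // e ∈ divEdges N} → Bool, orientProb N ρ f * (sccSize N f 1 : ℝ)
      = ∑ v ∈ Finset.Icc 1 N,
          (1 - ∑ f : {e // e ∈ divEdges N} → Bool,
            (if goodV N f v then 0 else orientProb N ρ f)) := by
    rw [Finset.sum_congr rfl fun f _ => by rw [hcast f, Finset.mul_sum]]
    rw [Finset.sum_comm]
    refine Finset.sum_congr rfl fun v _ => ?_
    have : ∀ f : {e // e ∈ divEdges N} → Bool,
        orientProb N ρ f * (if goodV N f v then (1:ℝ) else 0)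
          = orientProb N ρ f - (if goodV N f v then 0 else orientProb N ρ f) := by
      intro f
      by_cases h : goodV N f v <;> simp [h]
    rw [Finset.sum_congr rfl fun f _ => this f, Finset.sum_sub_distrib, prob_mass]
  rw [swap]
  have hcard : ((Finset.Icc 1 N).card : ℝ) = N := by rw [Nat.card_Icc]; push_cast; ring
  calc (N:ℝ) - ∑ v ∈ Finset.Icc 1 N,
        ((1 - ρ^2)^(ntDiv v).card + (1 - (1-ρ)^2)^(ntDiv v).card)
      = ∑ v ∈ Finset.Icc 1 N,
          (1 - ((1 - ρ^2)^(ntDiv v).card + (1 - (1-ρ)^2)^(ntDiv v).card)) := by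
        rw [Finset.sum_sub_distrib, Finset.sum_const, Nat.card_Icc, nsmul_eq_mul, mul_one]
        have : (↑(N + 1 - 1) : ℝ) = N := by
          have : N + 1 - 1 = N := by omega
          rw [this]
        rw [this]
    _ ≤ _ := Finset.sum_le_sum fun v hv => by
        have := prob_bad_vertex hρ hv
        linarith

lemma prime_sum_exists (F : Finset ℕ) (c : ℝ) :
    ∃ G : Finset ℕ, (∀ p ∈ G, Nat.Prime p) ∧ Disjoint G F ∧ c ≤ ∑ p ∈ G, (1:ℝ)/p := by
  by_contra h
  push_neg at h
  apply not_summable_one_div_on_primes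
  apply summable_of_sum_le (c := c + F.card)
    (fun n => Set.indicator_nonneg (fun m _ => by positivity) n)
  intro u
  have hind : ∑ n ∈ u, Set.indicator {p | p.Prime} (fun n : ℕ => (1:ℝ)/n) n
      = ∑ n ∈ u.filter Nat.Prime, (1:ℝ)/n := by
    rw [Finset.sum_filter]
    refine Finset.sum_congr rfl fun n _ => ?_
    by_cases hn : n.Prime
    · rw [if_pos hn]
      simp [Set.indicator_apply, Set.mem_setOf_eq, hn]
    · rw [if_neg hn]
      simp [Set.indicator_apply, Set.mem_setOf_eq, hn]
  rw [hind]
  set s := u.filter Nat.Prime with hs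
  have hsplit : ∑ n ∈ s ∩ F, (1:ℝ)/n + ∑ n ∈ s \ F, (1:ℝ)/n = ∑ n ∈ s, (1:ℝ)/n :=
    Finset.sum_inter_add_sum_sdiff s F _
  have h1 : ∑ n ∈ s \ F, (1:ℝ)/n < c := by
    refine h (s \ F) (fun p hp => ?_) Finset.sdiff_disjoint
    exact (Finset.mem_filter.mp (Finset.mem_sdiff.mp hp).1).2
  have h2 : ∑ n ∈ s ∩ F, (1:ℝ)/n ≤ F.card := by
    calc ∑ n ∈ s ∩ F, (1:ℝ)/n ≤ ∑ n ∈ s ∩ F, 1 := by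
          refine Finset.sum_le_sum fun n hn => ?_
          have hp : n.Prime := (Finset.mem_filter.mp (Finset.mem_inter.mp hn).1).2
          rw [div_le_one (by exact_mod_cast hp.pos)]
          exact_mod_cast hp.one_lt.le
      _ = (s ∩ F).card := by rw [Finset.sum_const, nsmul_eq_mul, mul_one]
      _ ≤ (F.card : ℝ) := by
          exact_mod_cast Finset.card_le_card (Finset.inter_subset_right)
  linarith

lemma groups_exist : ∀ (k : ℕ) (c : ℝ), ∃ 𝒢 : Fin k → Finset ℕ,
    (∀ i, ∀ p ∈ 𝒢 i, Nat.Prime p) ∧ (∀ i, c ≤ ∑ p ∈ 𝒢 i, (1:ℝ)/p) ∧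
    (∀ i j, i ≠ j → Disjoint (𝒢 i) (𝒢 j)) := by
  intro k
  induction k with
  | zero => exact fun c => ⟨fun i => i.elim0, fun i => i.elim0, fun i => i.elim0, fun i => i.elim0⟩
  | succ k ih =>
    intro c
    obtain ⟨𝒢, hprime, hsum, hdisj⟩ := ih c
    obtain ⟨G, hGp, hGd, hGs⟩ := prime_sum_exists ((Finset.univ : Finset (Fin k)).biUnion 𝒢) c
    refine ⟨Fin.cons G 𝒢, ?_, ?_, ?_⟩
    · intro i
      refine Fin.cases ?_ ?_ i
      · simpa using hGp
      · intro j; simpa using hprime j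
    · intro i
      refine Fin.cases ?_ ?_ i
      · simpa using hGs
      · intro j; simpa using hsum j
    · intro i j hij
      obtain rfl | ⟨i', rfl⟩ := Fin.eq_zero_or_eq_succ i <;>
        obtain rfl | ⟨j', rfl⟩ := Fin.eq_zero_or_eq_succ j
      · simp at hij
      · simp only [Fin.cons_zero, Fin.cons_succ]
        exact Finset.disjoint_left.mpr fun p hp hp' =>
          (Finset.disjoint_left.mp hGd) hp (Finset.mem_biUnion.mpr ⟨j', Finset.mem_univ _, hp'⟩)
      · simp only [Fin.cons_zero, Fin.cons_succ]
        exact (Finset.disjoint_left.mpr fun p hp hp' =>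
          (Finset.disjoint_left.mp hGd) hp'
            (Finset.mem_biUnion.mpr ⟨i', Finset.mem_univ _, hp⟩))
      · simp only [Fin.cons_succ]
        exact hdisj i' j' (by simpa using hij)

lemma totient_prod_primes (G : Finset ℕ) (hG : ∀ p ∈ G, Nat.Prime p) :
    Nat.totient (∏ p ∈ G, p) = ∏ p ∈ G, (p - 1) := by
  induction G using Finset.induction_on with
  | empty => simp
  | @insert a s ha ih =>
    have hpa : a.Prime := hG a (Finset.mem_insert_self a s)
    have hps : ∀ p ∈ s, Nat.Prime p := fun p hp => hG p (Finset.mem_insert_of_mem hp)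
    have hcop : Nat.Coprime a (∏ p ∈ s, p) := by
      rw [Nat.Prime.coprime_iff_not_dvd hpa]
      intro hdvd
      obtain ⟨q, hq, haq⟩ := hpa.prime.exists_mem_finset_dvd hdvd
      rw [Nat.prime_dvd_prime_iff_eq hpa (hps q hq)] at haq
      exact ha (haq ▸ hq)
    rw [Finset.prod_insert ha, Nat.totient_mul hcop, Nat.totient_prime hpa, ih hps,
      Finset.prod_insert ha]

lemma totient_prod_le (G : Finset ℕ) (hG : ∀ p ∈ G, Nat.Prime p) :
    ((∏ p ∈ G, p).totient : ℝ) ≤ (∏ p ∈ G, (p:ℝ)) * Real.exp (-∑ p ∈ G, (1:ℝ)/p) := by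
  rw [totient_prod_primes G hG]
  calc ((∏ p ∈ G, (p - 1) : ℕ) : ℝ) = ∏ p ∈ G, ((p:ℝ) - 1) := by
        rw [Nat.cast_prod]
        refine Finset.prod_congr rfl fun p hp => ?_
        have := (hG p hp).two_le
        rw [Nat.cast_sub (by omega)]
        norm_num
    _ ≤ ∏ p ∈ G, ((p:ℝ) * Real.exp (-(1/p))) := by
        refine Finset.prod_le_prod (fun p hp => ?_) (fun p hp => ?_)
        · have := (hG p hp).two_le
          have : (2:ℝ) ≤ p := by exact_mod_cast this
          linarith
        · have h2 := (hG p hp).two_le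
          have hp0 : (0:ℝ) < p := by exact_mod_cast (hG p hp).pos
          have hexp : 1 - 1/(p:ℝ) ≤ Real.exp (-(1/p)) := by
            have := Real.add_one_le_exp (-(1/(p:ℝ)))
            linarith
          calc (p:ℝ) - 1 = p * (1 - 1/p) := by field_simp
            _ ≤ p * Real.exp (-(1/p)) := mul_le_mul_of_nonneg_left hexp hp0.le
    _ = (∏ p ∈ G, (p:ℝ)) * Real.exp (-∑ p ∈ G, (1:ℝ)/p) := by
        rw [Finset.prod_mul_distrib, ← Real.exp_sum]
        congr 1
        simp

lemma count_coprime_le (N P : ℕ) (hP : 0 < P) :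
    ((Finset.Icc 1 N).filter (fun v => Nat.Coprime P v)).card
      ≤ P.totient * ((N+1) / P + 1) := by
  have hsub : (Finset.Icc 1 N).filter (fun v => Nat.Coprime P v)
      ⊆ (Finset.Ico 0 (0 + (N+1))).filter (fun v => Nat.Coprime P v) := by
    refine Finset.filter_subset_filter _ fun v hv => ?_
    simp only [Finset.mem_Icc] at hv
    simp only [Finset.mem_Ico]
    omega
  calc ((Finset.Icc 1 N).filter (fun v => Nat.Coprime P v)).card
      ≤ ((Finset.Ico 0 (0 + (N+1))).filter (fun v => Nat.Coprime P v)).card :=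
        Finset.card_le_card hsub
    _ ≤ P.totient * ((N+1) / P + 1) := Nat.Ico_filter_coprime_le 0 (N+1) hP.ne'

lemma subset_prod_inj {S : Finset ℕ} (hS : ∀ p ∈ S, Nat.Prime p) :
    Set.InjOn (fun T : Finset ℕ => ∏ p ∈ T, p) ↑S.powerset := by
  have key : ∀ T ∈ S.powerset, ∀ p, Nat.Prime p → (p ∈ T ↔ p ∣ ∏ q ∈ T, q) := by
    intro T hT p hp
    constructor
    · exact fun h => Finset.dvd_prod_of_mem _ h
    · intro hdvd
      obtain ⟨q, hq, hpq⟩ := hp.prime.exists_mem_finset_dvd hdvd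
      rw [Nat.prime_dvd_prime_iff_eq hp (hS q (Finset.mem_powerset.mp hT hq))] at hpq
      exact hpq ▸ hq
  intro T₁ hT₁ T₂ hT₂ he
  simp only [Finset.mem_coe, Finset.coe_powerset, Set.mem_preimage] at hT₁ hT₂
  have hT₁' : T₁ ∈ S.powerset := by simpa using hT₁
  have hT₂' : T₂ ∈ S.powerset := by simpa using hT₂
  have he' : ∏ p ∈ T₁, p = ∏ p ∈ T₂, p := he
  ext p
  by_cases hp : Nat.Prime p
  · rw [key T₁ hT₁' p hp, key T₂ hT₂' p hp, he']
  · constructor <;> intro h <;>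
      [exact absurd (hS p (Finset.mem_powerset.mp hT₁' h)) hp;
       exact absurd (hS p (Finset.mem_powerset.mp hT₂' h)) hp]

lemma many_divisors {v : ℕ} (hv : 1 ≤ v) {S : Finset ℕ} (hS : ∀ p ∈ S, Nat.Prime p)
    (hdvd : ∀ p ∈ S, p ∣ v) : 2 ^ S.card ≤ (ntDiv v).card + 2 := by
  set D := S.powerset.image (fun T : Finset ℕ => ∏ p ∈ T, p) with hD
  have hcard : D.card = 2 ^ S.card := by
    rw [hD, Finset.card_image_of_injOn (by
      intro T₁ hT₁ T₂ hT₂ he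
      exact subset_prod_inj hS (by exact_mod_cast hT₁) (by exact_mod_cast hT₂) he),
      Finset.card_powerset]
  have hsub : D \ {1, v} ⊆ ntDiv v := by
    intro x hx
    obtain ⟨hxD, hx1v⟩ := Finset.mem_sdiff.mp hx
    obtain ⟨T, hT, rfl⟩ := Finset.mem_image.mp hxD
    simp only [Finset.mem_insert, Finset.mem_singleton, not_or] at hx1v
    have hdx : (∏ p ∈ T, p) ∣ v := by
      refine Finset.prod_primes_dvd v (fun p hp => (hS p (Finset.mem_powerset.mp hT hp)).prime)
        (fun p hp => hdvd p (Finset.mem_powerset.mp hT hp))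
    have hx1 : 1 ≤ ∏ p ∈ T, p :=
      Finset.one_le_prod' fun p hp => (hS p (Finset.mem_powerset.mp hT hp)).pos
    have hlt : ∏ p ∈ T, p < v :=
      lt_of_le_of_ne (Nat.le_of_dvd hv hdx) hx1v.2
    have hgt : 1 < ∏ p ∈ T, p := lt_of_le_of_ne hx1 (Ne.symm hx1v.1)
    simp only [ntDiv, Finset.mem_filter, Finset.mem_Ioo]
    exact ⟨⟨hgt, hlt⟩, hdx⟩
  calc 2 ^ S.card = D.card := hcard.symm
    _ ≤ (D \ {1, v}).card + ({1, v} : Finset ℕ).card := Finset.card_le_card_sdiff_add_card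
    _ ≤ (ntDiv v).card + 2 := by
        have h2 : ({1, v} : Finset ℕ).card ≤ 2 := Finset.card_insert_le _ _ |>.trans (by simp)
        have := Finset.card_le_card hsub
        omega

lemma tendsto_sum_r_pow {r : ℝ} (hr0 : 0 ≤ r) (hr1 : r < 1) :
    Filter.Tendsto (fun N : ℕ => (∑ v ∈ Finset.Icc 1 N, r ^ (ntDiv v).card) / N)
      Filter.atTop (nhds 0) := by
  rw [Metric.tendsto_atTop]
  intro ε hε
  obtain ⟨t, ht⟩ := exists_pow_lt_of_lt_one (show (0:ℝ) < ε/4 by linarith) hr1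
  set k := t + 2 with hk
  have h2k : t + 2 ≤ 2 ^ k := (Nat.lt_two_pow_self (n := t+2)).le
  set c := Real.log (8 * (k+1) / ε) with hc
  have hden : (0:ℝ) < 8 * (k+1) := by positivity
  have hexpc : Real.exp (-c) = ε / (8 * (k+1)) := by
    rw [Real.exp_neg, Real.exp_log (by positivity), inv_div]
  obtain ⟨𝒢, hGp, hGs, hGd⟩ := groups_exist k c
  set P : Fin k → ℕ := fun i => ∏ p ∈ 𝒢 i, p with hPdef
  have hPpos : ∀ i, 0 < P i := fun i => Finset.prod_pos fun p hp => (hGp i p hp).pos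
  set C : ℝ := ∑ i : Fin k, (P i : ℝ) with hCdef
  have hCnn : 0 ≤ C := Finset.sum_nonneg fun i _ => by positivity
  obtain ⟨M, hM⟩ := exists_nat_ge (4 * C / ε)
  refine ⟨max 1 M, fun N hN => ?_⟩
  have hN1 : 1 ≤ N := le_trans (le_max_left _ _) hN
  have hNM : (M:ℝ) ≤ N := by exact_mod_cast le_trans (le_max_right _ _) hN
  have hNpos : (0:ℝ) < N := by exact_mod_cast hN1
  set bad := (Finset.Icc 1 N).filter (fun v => ∃ i, Nat.Coprime (P i) v) with hbad
  set good := (Finset.Icc 1 N).filter (fun v => ¬ ∃ i, Nat.Coprime (P i) v) with hgood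
  have hsplit : ∑ v ∈ bad, r ^ (ntDiv v).card + ∑ v ∈ good, r ^ (ntDiv v).card
      = ∑ v ∈ Finset.Icc 1 N, r ^ (ntDiv v).card :=
    Finset.sum_filter_add_sum_filter_not _ _ _
  -- bad part
  have hbadcard : (bad.card : ℝ) ≤ (k:ℝ) * ((N:ℝ)+1) * Real.exp (-c) + C := by
    have hsub : bad ⊆ (Finset.univ : Finset (Fin k)).biUnion
        (fun i => (Finset.Icc 1 N).filter (fun v => Nat.Coprime (P i) v)) := by
      intro v hv
      obtain ⟨hv1, i, hvi⟩ := Finset.mem_filter.mp hv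
      exact Finset.mem_biUnion.mpr ⟨i, Finset.mem_univ _, Finset.mem_filter.mpr ⟨hv1, hvi⟩⟩
    have h1 : bad.card ≤ ∑ i : Fin k, ((Finset.Icc 1 N).filter
        (fun v => Nat.Coprime (P i) v)).card :=
      le_trans (Finset.card_le_card hsub) (Finset.card_biUnion_le)
    have h2 : ∀ i : Fin k, (((Finset.Icc 1 N).filter
        (fun v => Nat.Coprime (P i) v)).card : ℝ)
        ≤ ((N:ℝ)+1) * Real.exp (-c) + (P i : ℝ) := by
      intro i
      have hcnt := count_coprime_le N (P i) (hPpos i)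
      have hφ1 : ((P i).totient : ℝ) ≤ (P i : ℝ) * Real.exp (-c) := by
        have := totient_prod_le (𝒢 i) (hGp i)
        have hPc : (∏ p ∈ 𝒢 i, (p:ℝ)) = (P i : ℝ) := by
          rw [hPdef]; push_cast; rfl
        rw [hPc] at this
        refine le_trans this ?_
        have : Real.exp (-∑ p ∈ 𝒢 i, (1:ℝ)/p) ≤ Real.exp (-c) :=
          Real.exp_le_exp.mpr (by linarith [hGs i])
        exact mul_le_mul_of_nonneg_left this (by positivity)
      have hφ2 : ((P i).totient : ℝ) ≤ (P i : ℝ) := by exact_mod_cast Nat.totient_le _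
      have hdiv : ((((N:ℕ)+1) / (P i) : ℕ) : ℝ) ≤ ((N:ℝ)+1) / (P i : ℝ) := by
        have := Nat.cast_div_le (α := ℝ) (m := N+1) (n := P i)
        push_cast at this ⊢
        exact this
      have hφnn : (0:ℝ) ≤ ((P i).totient : ℝ) := by positivity
      calc (((Finset.Icc 1 N).filter (fun v => Nat.Coprime (P i) v)).card : ℝ)
          ≤ ((P i).totient : ℝ) * ((((N:ℕ)+1) / (P i) : ℕ) + 1 : ℕ) := by exact_mod_cast hcnt
        _ = ((P i).totient : ℝ) * ((((N:ℕ)+1) / (P i) : ℕ) : ℝ)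
            + ((P i).totient : ℝ) := by push_cast; ring
        _ ≤ ((P i : ℝ) * Real.exp (-c)) * (((N:ℝ)+1) / (P i : ℝ)) + (P i : ℝ) := by
            refine add_le_add ?_ hφ2
            refine mul_le_mul hφ1 hdiv (by positivity) (by positivity)
        _ = ((N:ℝ)+1) * Real.exp (-c) + (P i : ℝ) := by
            have : (P i : ℝ) ≠ 0 := by
              have := hPpos i; positivity
            field_simp
    calc (bad.card : ℝ) ≤ ∑ i : Fin k, (((Finset.Icc 1 N).filter
          (fun v => Nat.Coprime (P i) v)).card : ℝ) := by exact_mod_cast h1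
      _ ≤ ∑ i : Fin k, (((N:ℝ)+1) * Real.exp (-c) + (P i : ℝ)) :=
          Finset.sum_le_sum fun i _ => h2 i
      _ = (k:ℝ) * ((N:ℝ)+1) * Real.exp (-c) + C := by
          rw [Finset.sum_add_distrib, Finset.sum_const, hCdef]
          simp [Finset.card_univ]
          ring
  have hbadsum : ∑ v ∈ bad, r ^ (ntDiv v).card ≤ (bad.card : ℝ) := by
    calc ∑ v ∈ bad, r ^ (ntDiv v).card ≤ ∑ v ∈ bad, 1 :=
        Finset.sum_le_sum fun v _ => pow_le_one₀ hr0 hr1.le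
      _ = (bad.card : ℝ) := by rw [Finset.sum_const, nsmul_eq_mul, mul_one]
  -- good part
  have hgoodsum : ∑ v ∈ good, r ^ (ntDiv v).card ≤ (N:ℝ) * r ^ t := by
    have hterm : ∀ v ∈ good, r ^ (ntDiv v).card ≤ r ^ t := by
      intro v hv
      obtain ⟨hv1, hnc⟩ := Finset.mem_filter.mp hv
      push_neg at hnc
      have hv1' : 1 ≤ v := (Finset.mem_Icc.mp hv1).1
      have hg : ∀ i : Fin k, ∃ p, Nat.Prime p ∧ p ∈ 𝒢 i ∧ p ∣ v := by
        intro i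
        obtain ⟨p, hp, hpd⟩ := Nat.exists_prime_and_dvd (hnc i)
        have hpP : p ∣ P i := hpd.trans (Nat.gcd_dvd_left _ _)
        have hpv : p ∣ v := hpd.trans (Nat.gcd_dvd_right _ _)
        obtain ⟨q, hq, hpq⟩ := hp.prime.exists_mem_finset_dvd hpP
        rw [Nat.prime_dvd_prime_iff_eq hp (hGp i q hq)] at hpq
        exact ⟨p, hp, hpq ▸ hq, hpv⟩
      choose g hg1 hg2 hg3 using hg
      have hinj : Function.Injective g := by
        intro i j hij
        by_contra hne
        exact (Finset.disjoint_left.mp (hGd i j hne)) (hg2 i) (hij ▸ hg2 j)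
      set S := Finset.image g Finset.univ with hS
      have hScard : S.card = k := by
        rw [hS, Finset.card_image_of_injective _ hinj, Finset.card_univ, Fintype.card_fin]
      have hmany : 2 ^ k ≤ (ntDiv v).card + 2 := by
        rw [← hScard]
        refine many_divisors hv1' (fun p hp => ?_) (fun p hp => ?_)
        · obtain ⟨i, _, rfl⟩ := Finset.mem_image.mp hp
          exact hg1 i
        · obtain ⟨i, _, rfl⟩ := Finset.mem_image.mp hp
          exact hg3 i
      have htle : t ≤ (ntDiv v).card := by omega
      exact pow_le_pow_of_le_one hr0 hr1.le htle
    calc ∑ v ∈ good, r ^ (ntDiv v).card ≤ ∑ v ∈ good, r ^ t :=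
        Finset.sum_le_sum hterm
      _ = (good.card : ℝ) * r ^ t := by rw [Finset.sum_const, nsmul_eq_mul]
      _ ≤ (N:ℝ) * r ^ t := by
          refine mul_le_mul_of_nonneg_right ?_ (by positivity)
          have : good.card ≤ N := le_trans (Finset.card_filter_le _ _) (by
            rw [Nat.card_Icc]; omega)
          exact_mod_cast this
  -- assemble
  have hnn : 0 ≤ ∑ v ∈ Finset.Icc 1 N, r ^ (ntDiv v).card :=
    Finset.sum_nonneg fun v _ => by positivity
  have htotal : ∑ v ∈ Finset.Icc 1 N, r ^ (ntDiv v).card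
      ≤ (k:ℝ) * ((N:ℝ)+1) * Real.exp (-c) + C + (N:ℝ) * r ^ t := by
    rw [← hsplit]
    have := le_trans hbadsum hbadcard
    linarith
  have hA : (k:ℝ) * ((N:ℝ)+1) * Real.exp (-c) ≤ ε/4 * N := by
    rw [hexpc]
    have hk0 : (0:ℝ) ≤ (k:ℝ) := Nat.cast_nonneg k
    have hN1R : (1:ℝ) ≤ (N:ℝ) := by exact_mod_cast hN1
    have hkN : (k:ℝ) * 1 ≤ (k:ℝ) * (N:ℝ) := mul_le_mul_of_nonneg_left hN1R hk0
    have key : (k:ℝ)*((N:ℝ)+1) ≤ 2*(N:ℝ)*((k:ℝ)+1) := by nlinarith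
    calc (k:ℝ) * ((N:ℝ)+1) * (ε/(8*((k:ℝ)+1))) = ((k:ℝ)*((N:ℝ)+1)) * ε / (8*((k:ℝ)+1)) := by
          ring
      _ ≤ (2*(N:ℝ)*((k:ℝ)+1)) * ε / (8*((k:ℝ)+1)) := by
          gcongr
      _ = ε/4 * N := by
          have hkp : ((k:ℝ)+1) ≠ 0 := by positivity
          field_simp
          ring
  have hB : C ≤ ε/4 * N := by
    rw [div_le_iff₀ hε] at hM
    have h2 : (M:ℝ)*ε ≤ (N:ℝ)*ε := mul_le_mul_of_nonneg_right hNM hε.le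
    linarith
  have hCC : (N:ℝ) * r ^ t ≤ ε/4 * N := by
    refine le_trans (mul_le_mul_of_nonneg_left ht.le hNpos.le) (le_of_eq (by ring))
  have hfinal : ∑ v ∈ Finset.Icc 1 N, r ^ (ntDiv v).card ≤ 3 * ε / 4 * N := by
    linarith
  rw [Real.dist_eq, sub_zero, abs_of_nonneg (by positivity)]
  rw [div_lt_iff₀ hNpos]
  calc ∑ v ∈ Finset.Icc 1 N, r ^ (ntDiv v).card ≤ 3 * ε / 4 * N := hfinal
    _ < ε * N := by nlinarith


/-- For fixed `ρ ∈ (0,1)`, `E[#Φ(𝒟_ρ(N))]/N → 1` as `N → ∞`. -/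
theorem stmt15 (ρ : ℝ) (hρ : ρ ∈ Set.Ioo (0 : ℝ) 1) :
    Filter.Tendsto (fun N : ℕ => expLargestSCC N ρ / N) Filter.atTop (nhds 1) := by
  obtain ⟨hρ0, hρ1⟩ := hρ
  set r : ℝ := 1 - (ρ*(1-ρ))^2 with hrdef
  have hq : 0 < ρ*(1-ρ) := by nlinarith
  have hq1 : ρ*(1-ρ) ≤ 1/4 := by nlinarith [sq_nonneg (ρ - 1/2)]
  have hr0 : 0 ≤ r := by nlinarith
  have hr1 : r < 1 := by nlinarith
  have hb1 : (1 - ρ^2) ≤ r := by nlinarith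
  have hb2 : (1 - (1-ρ)^2) ≤ r := by nlinarith
  have hb1' : (0:ℝ) ≤ 1 - ρ^2 := by nlinarith
  have hb2' : (0:ℝ) ≤ 1 - (1-ρ)^2 := by nlinarith
  have hbound : ∀ v : ℕ, (1 - ρ^2)^(ntDiv v).card + (1 - (1-ρ)^2)^(ntDiv v).card
      ≤ 2 * r^(ntDiv v).card := by
    intro v
    have h1 := pow_le_pow_left₀ hb1' hb1 (ntDiv v).card
    have h2 := pow_le_pow_left₀ hb2' hb2 (ntDiv v).card
    linarith
  have hSig := tendsto_sum_r_pow hr0 hr1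
  have hlowlim : Filter.Tendsto
      (fun N : ℕ => 1 - 2 * ((∑ v ∈ Finset.Icc 1 N, r ^ (ntDiv v).card) / N))
      Filter.atTop (nhds 1) := by
    have := Filter.Tendsto.const_sub (1:ℝ) (hSig.const_mul 2)
    simpa using this
  refine tendsto_of_tendsto_of_tendsto_of_le_of_le' hlowlim tendsto_const_nhds ?_ ?_
  · refine Filter.eventually_atTop.mpr ⟨1, fun N hN => ?_⟩
    have hNpos : (0:ℝ) < N := by exact_mod_cast hN
    have hlow := exp_lower ⟨hρ0, hρ1⟩ hN (ρ := ρ)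
    have hsum : ∑ v ∈ Finset.Icc 1 N,
        ((1 - ρ^2)^(ntDiv v).card + (1 - (1-ρ)^2)^(ntDiv v).card)
        ≤ 2 * ∑ v ∈ Finset.Icc 1 N, r ^ (ntDiv v).card := by
      rw [Finset.mul_sum]
      exact Finset.sum_le_sum fun v _ => hbound v
    have key : (N:ℝ) - 2 * ∑ v ∈ Finset.Icc 1 N, r ^ (ntDiv v).card
        ≤ expLargestSCC N ρ := by linarith
    calc 1 - 2 * ((∑ v ∈ Finset.Icc 1 N, r ^ (ntDiv v).card) / N)
        = ((N:ℝ) - 2 * ∑ v ∈ Finset.Icc 1 N, r ^ (ntDiv v).card) / N := by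
          field_simp
      _ ≤ expLargestSCC N ρ / N := (div_le_div_iff_of_pos_right hNpos).mpr key
  · refine Filter.eventually_atTop.mpr ⟨1, fun N hN => ?_⟩
    have hNpos : (0:ℝ) < N := by exact_mod_cast hN
    rw [div_le_one hNpos]
    exact exp_upper ⟨hρ0, hρ1⟩ N
end
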